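/- Proposition 1(ii) (sliding surface of a union). Let E be a real normed vector space, let f_a, f_b : E → E be two vector fields, and let c₁, c₂ : E → ℝ be continuous and differentiable functions. Set Aᵢ = {x | cᵢ(x) ≤ 0} for i = 1, 2, and assume that frontier(Aᵢ) = {x | cᵢ(x) = 0} for i = 1, 2 and that frontier(A₁) ∩ frontier(A₂) = ∅. Let c(x) = min(c₁(x), c₂(x)), so that A₁ ∪ A₂ = {x | c(x) ≤ 0}. Define S(Aᵢ) = frontier(Aᵢ) ∩ {x | Dcᵢ(x)(f_a(x)) ≥ 0 and Dcᵢ(x)(f_b(x)) ≤ 0}, and define S(A₁ ∪ A₂) = frontier(A₁ ∪ A₂) ∩ {x | Dc(x)(f_a(x)) ≥ 0 and Dc(x)(f_b(x)) ≤ 0}, where D denotes the Fréchet derivative. Then S(A₁ ∪ A₂) = (S(A₁) ∩ closure(A₂ᶜ)) ∪ (S(A₂) ∩ closure(A₁ᶜ)). -/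
import Mathlib

open Set

-- fderiv of min equals fderiv of the smaller branch
lemma min_fderiv_aux {E : Type*} [NormedAddCommGroup E] [NormedSpace ℝ E]
    (c₁ c₂ : E → ℝ) (hc₁ : Continuous c₁) (hc₂ : Continuous c₂)
    (x : E) (h1 : c₁ x = 0) (h2 : 0 < c₂ x) :
    fderiv ℝ (fun y => min (c₁ y) (c₂ y)) x = fderiv ℝ c₁ x := by
  apply Filter.EventuallyEq.fderiv_eq
  have hU : {y | c₁ y < c₂ y} ∈ nhds x := by
    apply (isOpen_lt hc₁ hc₂).mem_nhds
    simpa [h1] using h2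
  filter_upwards [hU] with y hy
  exact min_eq_left hy.le

-- membership in frontier of the union
lemma mem_frontier_union_aux {E : Type*} [NormedAddCommGroup E] [NormedSpace ℝ E]
    (c₁ c₂ : E → ℝ) (hc₁ : Continuous c₁) (hc₂ : Continuous c₂)
    (A₁ A₂ : Set E) (hA₁ : A₁ = {x | c₁ x ≤ 0}) (hA₂ : A₂ = {x | c₂ x ≤ 0})
    (hfr₁ : frontier A₁ = {x | c₁ x = 0})
    (x : E) (h1 : c₁ x = 0) (h2 : 0 < c₂ x) :
    x ∈ frontier (A₁ ∪ A₂) := by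
  constructor
  · apply subset_closure
    left
    rw [hA₁]; exact le_of_eq h1
  · intro hint
    have hxfr : x ∈ frontier A₁ := by rw [hfr₁]; exact h1
    apply hxfr.2
    rw [mem_interior_iff_mem_nhds]
    have hU : {y | 0 < c₂ y} ∈ nhds x :=
      (isOpen_lt continuous_const hc₂).mem_nhds h2
    have hV : interior (A₁ ∪ A₂) ∈ nhds x := (isOpen_interior).mem_nhds hint
    filter_upwards [hU, hV] with y hy1 hy2
    rcases interior_subset hy2 with h | h
    · exact h
    · rw [hA₂] at h; exact absurd hy1 (not_lt.mpr h)

theorem sliding_surface_union {E : Type*} [NormedAddCommGroup E] [NormedSpace ℝ E]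
    (fa fb : E → E) (c₁ c₂ : E → ℝ)
    (hc₁ : Continuous c₁) (hc₂ : Continuous c₂)
    (hd₁ : Differentiable ℝ c₁) (hd₂ : Differentiable ℝ c₂)
    (A₁ A₂ : Set E) (hA₁ : A₁ = {x | c₁ x ≤ 0}) (hA₂ : A₂ = {x | c₂ x ≤ 0})
    (hfr₁ : frontier A₁ = {x | c₁ x = 0}) (hfr₂ : frontier A₂ = {x | c₂ x = 0})
    (hdisj : frontier A₁ ∩ frontier A₂ = ∅)
    (c : E → ℝ) (hc : c = fun x => min (c₁ x) (c₂ x)) :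
    frontier (A₁ ∪ A₂) ∩
        {x | 0 ≤ fderiv ℝ c x (fa x) ∧ fderiv ℝ c x (fb x) ≤ 0} =
      (frontier A₁ ∩
          {x | 0 ≤ fderiv ℝ c₁ x (fa x) ∧ fderiv ℝ c₁ x (fb x) ≤ 0} ∩ closure A₂ᶜ) ∪
        (frontier A₂ ∩
          {x | 0 ≤ fderiv ℝ c₂ x (fa x) ∧ fderiv ℝ c₂ x (fb x) ≤ 0} ∩ closure A₁ᶜ) := by
  -- basic facts
  have hne : ∀ x : E, c₁ x = 0 → c₂ x ≠ 0 := by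
    intro x hx1 hx2
    have : x ∈ frontier A₁ ∩ frontier A₂ := by
      constructor
      · rw [hfr₁]; exact hx1
      · rw [hfr₂]; exact hx2
    rw [hdisj] at this; exact this
  have hint1 : ∀ x : E, c₁ x < 0 → x ∈ interior A₁ := by
    intro x hx
    apply interior_maximal (fun y (hy : c₁ y < 0) => by rw [hA₁]; exact hy.le)
      (isOpen_lt hc₁ continuous_const) hx
  have hint2 : ∀ x : E, c₂ x < 0 → x ∈ interior A₂ := by
    intro x hx
    apply interior_maximal (fun y (hy : c₂ y < 0) => by rw [hA₂]; exact hy.le)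
      (isOpen_lt hc₂ continuous_const) hx
  -- closure of complement characterization on the other frontier
  have hcl2 : ∀ x : E, c₁ x = 0 → (x ∈ closure A₂ᶜ ↔ 0 < c₂ x) := by
    intro x h1
    rw [closure_compl, mem_compl_iff]
    constructor
    · intro h
      rcases lt_trichotomy (c₂ x) 0 with h' | h' | h'
      · exact absurd (hint2 x h') h
      · exact absurd h' (hne x h1)
      · exact h'
    · intro h hmem
      have := interior_subset hmem
      rw [hA₂] at this
      exact absurd h (not_lt.mpr this)
  have hcl1 : ∀ x : E, c₂ x = 0 → (x ∈ closure A₁ᶜ ↔ 0 < c₁ x) := by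
    intro x h2
    rw [closure_compl, mem_compl_iff]
    constructor
    · intro h
      rcases lt_trichotomy (c₁ x) 0 with h' | h' | h'
      · exact absurd (hint1 x h') h
      · exact absurd h2 (hne x h')
      · exact h'
    · intro h hmem
      have := interior_subset hmem
      rw [hA₁] at this
      exact absurd h (not_lt.mpr this)
  -- fderiv identifications
  have hfd1 : ∀ x : E, c₁ x = 0 → 0 < c₂ x → fderiv ℝ c x = fderiv ℝ c₁ x := by
    intro x h1 h2; rw [hc]; exact min_fderiv_aux c₁ c₂ hc₁ hc₂ x h1 h2
  have hfd2 : ∀ x : E, c₂ x = 0 → 0 < c₁ x → fderiv ℝ c x = fderiv ℝ c₂ x := by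
    intro x h2 h1
    have : c = fun y => min (c₂ y) (c₁ y) := by
      rw [hc]; funext y; exact min_comm _ _
    rw [this]; exact min_fderiv_aux c₂ c₁ hc₂ hc₁ x h2 h1
  -- frontier of the union characterization
  have hfr_sub : ∀ x ∈ frontier (A₁ ∪ A₂),
      (c₁ x = 0 ∧ 0 < c₂ x) ∨ (c₂ x = 0 ∧ 0 < c₁ x) := by
    intro x hx
    have hnotint : x ∉ interior (A₁ ∪ A₂) := hx.2
    rcases frontier_union_subset A₁ A₂ hx with ⟨h, -⟩ | ⟨-, h⟩
    · rw [hfr₁] at h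
      left
      refine ⟨h, ?_⟩
      rcases lt_trichotomy (c₂ x) 0 with h' | h' | h'
      · exact absurd (interior_mono subset_union_right (hint2 x h')) hnotint
      · exact absurd h' (hne x h)
      · exact h'
    · rw [hfr₂] at h
      right
      refine ⟨h, ?_⟩
      rcases lt_trichotomy (c₁ x) 0 with h' | h' | h'
      · exact absurd (interior_mono subset_union_left (hint1 x h')) hnotint
      · exact absurd h (hne x h')
      · exact h'
  ext x
  simp only [mem_inter_iff, mem_union, mem_setOf_eq]
  constructor
  · rintro ⟨hxf, hda, hdb⟩
    rcases hfr_sub x hxf with ⟨h1, h2⟩ | ⟨h2, h1⟩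
    · left
      rw [hfd1 x h1 h2] at hda hdb
      exact ⟨⟨by rw [hfr₁]; exact h1, hda, hdb⟩, (hcl2 x h1).mpr h2⟩
    · right
      rw [hfd2 x h2 h1] at hda hdb
      exact ⟨⟨by rw [hfr₂]; exact h2, hda, hdb⟩, (hcl1 x h2).mpr h1⟩
  · rintro (⟨⟨hxf, hda, hdb⟩, hxc⟩ | ⟨⟨hxf, hda, hdb⟩, hxc⟩)
    · rw [hfr₁] at hxf
      have h2 : 0 < c₂ x := (hcl2 x hxf).mp hxc
      refine ⟨mem_frontier_union_aux c₁ c₂ hc₁ hc₂ A₁ A₂ hA₁ hA₂ hfr₁ x hxf h2, ?_, ?_⟩ <;>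
        rw [hfd1 x hxf h2]
      exacts [hda, hdb]
    · rw [hfr₂] at hxf
      have h1 : 0 < c₁ x := (hcl1 x hxf).mp hxc
      have hmem : x ∈ frontier (A₂ ∪ A₁) :=
        mem_frontier_union_aux c₂ c₁ hc₂ hc₁ A₂ A₁ hA₂ hA₁ hfr₂ x hxf h1
      rw [union_comm] at hmem
      refine ⟨hmem, ?_, ?_⟩ <;> rw [hfd2 x hxf h1]
      exacts [hda, hdb]
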